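/- Let x_1, ..., x_n ∈ ℝ^d with Euclidean norms ‖x_t‖₂ ≤ L, and let Λ_n = Σ_{t=1}^n x_t x_tᵀ. Then for every α > 0, log det(α Λ_n + Id) ≤ rank(Λ_n) · log(1 + α n L² / rank(Λ_n)). -/

import Mathlib

open Matrix

theorem logdet_rank_bound (d n : ℕ) (x : Fin n → EuclideanSpace ℝ (Fin d))
    (L : ℝ) (hL : ∀ t, ‖x t‖ ≤ L)
    (Λ : Matrix (Fin d) (Fin d) ℝ)
    (hΛ : Λ = ∑ t, Matrix.vecMulVec (x t) (x t))
    (hrank : 1 ≤ Λ.rank)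
    (α : ℝ) (hα : 0 < α) :
    Real.log (α • Λ + 1).det ≤
      (Λ.rank : ℝ) * Real.log (1 + α * n * L ^ 2 / (Λ.rank : ℝ)) := by
  -- Λ is positive semidefinite
  have hpsd : Λ.PosSemidef := by
    rw [hΛ]
    refine Finset.sum_induction _ (fun A : Matrix (Fin d) (Fin d) ℝ => A.PosSemidef)
      (fun A B hA hB => hA.add hB) Matrix.PosSemidef.zero (fun t _ => ?_)
    have h1 : Matrix.vecMulVec (x t) (x t) = (replicateRow (Fin 1) (x t).ofLp)ᴴ * replicateRow (Fin 1) (x t).ofLp := by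
      rw [conjTranspose_replicateRow, star_trivial]
      exact vecMulVec_eq (ι := Fin 1) _ _
    rw [h1]
    exact posSemidef_conjTranspose_mul_self _
  have hH : Λ.IsHermitian := hpsd.isHermitian
  set μ : Fin d → ℝ := hH.eigenvalues with hμ
  have hμ0 : ∀ i, 0 ≤ μ i := hpsd.eigenvalues_nonneg
  -- n ≥ 1 and L ≥ 0
  have hn : 0 < n := by
    by_contra h
    push_neg at h
    interval_cases n
    simp only [Finset.univ_eq_empty, Finset.sum_empty] at hΛ
    rw [hΛ, Matrix.rank_zero] at hrank
    omega
  have hL0 : 0 ≤ L := le_trans (norm_nonneg (x ⟨0, hn⟩)) (hL _)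
  -- trace bound
  have htrace : Λ.trace ≤ n * L ^ 2 := by
    rw [hΛ, Matrix.trace_sum]
    have h1 : ∀ t, (Matrix.vecMulVec (x t) (x t)).trace = ‖x t‖ ^ 2 := by
      intro t
      rw [EuclideanSpace.norm_eq]
      rw [Real.sq_sqrt (by positivity)]
      simp [Matrix.trace, Matrix.diag, Matrix.vecMulVec_apply, sq]
    calc ∑ t, (Matrix.vecMulVec (x t) (x t)).trace = ∑ t, ‖x t‖ ^ 2 := by
          simp_rw [h1]
      _ ≤ ∑ _t : Fin n, L ^ 2 := Finset.sum_le_sum fun t _ =>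
          pow_le_pow_left₀ (norm_nonneg _) (hL t) 2
      _ = n * L ^ 2 := by simp [mul_comm]
  -- trace = sum of eigenvalues
  have htr_eig : Λ.trace = ∑ i, μ i := by
    conv_lhs => rw [hH.spectral_theorem, Unitary.conjStarAlgAut_apply]
    rw [Matrix.trace_mul_cycle]
    rw [show (star (hH.eigenvectorUnitary : Matrix (Fin d) (Fin d) ℝ)) *
        (hH.eigenvectorUnitary : Matrix (Fin d) (Fin d) ℝ) = 1 from
      Unitary.coe_star_mul_self _]
    rw [one_mul, Matrix.trace_diagonal]
    simp [hμ]
  -- determinant formula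
  have hUU : (hH.eigenvectorUnitary : Matrix (Fin d) (Fin d) ℝ) *
      (star (hH.eigenvectorUnitary : Matrix (Fin d) (Fin d) ℝ)) = 1 :=
    Matrix.mem_unitaryGroup_iff.mp hH.eigenvectorUnitary.2
  have hdet : (α • Λ + 1).det = ∏ i, (1 + α * μ i) := by
    have hD : α • Matrix.diagonal (RCLike.ofReal ∘ μ) + 1 =
        Matrix.diagonal (fun i : Fin d => 1 + α * μ i) := by
      ext i j
      rcases eq_or_ne i j with h | h
      · subst h
        simp [Matrix.one_apply, add_comm]
      · simp [Matrix.diagonal_apply_ne _ h, Matrix.one_apply_ne h]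
    have hdiag : α • Λ + 1 = (hH.eigenvectorUnitary : Matrix (Fin d) (Fin d) ℝ) *
        Matrix.diagonal (fun i : Fin d => 1 + α * μ i) *
        (star (hH.eigenvectorUnitary : Matrix (Fin d) (Fin d) ℝ)) := by
      rw [← hD, mul_add, add_mul, mul_one, hUU, mul_smul_comm, smul_mul_assoc]
      conv_lhs => rw [hH.spectral_theorem, Unitary.conjStarAlgAut_apply]
    rw [hdiag, Matrix.det_mul_right_comm, hUU, one_mul, Matrix.det_diagonal]
  -- analytic part
  have hr0 : (0:ℝ) < (Λ.rank : ℝ) := by exact_mod_cast Nat.lt_of_lt_of_le Nat.zero_lt_one hrank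
  set r : ℝ := (Λ.rank : ℝ) with hrdef
  have htr0 : 0 ≤ Λ.trace := by
    rw [htr_eig]; exact Finset.sum_nonneg fun i _ => hμ0 i
  have hpos : ∀ i : Fin d, 0 < 1 + α * μ i := fun i => by nlinarith [hμ0 i]
  have hlog : Real.log (α • Λ + 1).det = ∑ i, Real.log (1 + α * μ i) := by
    rw [hdet, Real.log_prod fun i _ => (hpos i).ne']
  classical
  set s : Finset (Fin d) := Finset.univ.filter (fun i => μ i ≠ 0) with hs
  have hcard : (s.card : ℝ) = r := by
    rw [hrdef, hH.rank_eq_card_non_zero_eigs, Fintype.card_subtype]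
  have hSμ : ∑ i ∈ s, μ i = Λ.trace := by
    rw [htr_eig]
    exact Finset.sum_subset (Finset.filter_subset _ _) (fun i _ hi => by
      simpa [hs] using hi)
  have hsum_log : ∑ i, Real.log (1 + α * μ i) = ∑ i ∈ s, Real.log (1 + α * μ i) :=
    (Finset.sum_subset (Finset.filter_subset _ _) (fun i _ hi => by
      have h0 : μ i = 0 := by simpa [hs] using hi
      simp [h0])).symm
  have hw1 : ∑ _i ∈ s, (r⁻¹ : ℝ) = 1 := by
    rw [Finset.sum_const, nsmul_eq_mul, hcard, mul_inv_cancel₀ hr0.ne']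
  have hjen := (strictConcaveOn_log_Ioi.concaveOn).le_map_sum (t := s)
    (w := fun _ => (r⁻¹ : ℝ)) (p := fun i => 1 + α * μ i)
    (fun i _ => by positivity) hw1 (fun i _ => Set.mem_Ioi.mpr (hpos i))
  have hsum1 : ∑ i ∈ s, (1 + α * μ i) = r + α * Λ.trace := by
    rw [Finset.sum_add_distrib, Finset.sum_const, ← Finset.mul_sum, hSμ, nsmul_eq_mul,
      mul_one, hcard]
  have hinner : ∑ i ∈ s, r⁻¹ • (1 + α * μ i) = 1 + α * Λ.trace / r := by
    rw [← Finset.smul_sum, hsum1, smul_eq_mul]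
    field_simp
  calc Real.log (α • Λ + 1).det
      = ∑ i ∈ s, Real.log (1 + α * μ i) := by rw [hlog, hsum_log]
    _ = r * (r⁻¹ • ∑ i ∈ s, Real.log (1 + α * μ i)) := by
        rw [smul_eq_mul, ← mul_assoc, mul_inv_cancel₀ hr0.ne', one_mul]
    _ = r * ∑ i ∈ s, r⁻¹ • Real.log (1 + α * μ i) := by rw [Finset.smul_sum]
    _ ≤ r * Real.log (∑ i ∈ s, r⁻¹ • (1 + α * μ i)) :=
        mul_le_mul_of_nonneg_left hjen hr0.le
    _ = r * Real.log (1 + α * Λ.trace / r) := by rw [hinner]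
    _ ≤ r * Real.log (1 + α * n * L ^ 2 / r) := by
        refine mul_le_mul_of_nonneg_left ?_ hr0.le
        have h1 : 0 < 1 + α * Λ.trace / r := by positivity
        refine Real.log_le_log h1 ?_
        have : α * Λ.trace ≤ α * n * L ^ 2 := by
          rw [mul_assoc]
          exact mul_le_mul_of_nonneg_left htrace hα.le
        gcongr
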